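/- The Laplace operator Δ̂_σ satisfies the commutation relations [Δ̂_σ, Δ̂_G] = 4k Δ̂_G and [Δ̂_σ, Δ̂_Ḡ] = −4k Δ̂_Ḡ as operators on Schwartz functions on E. -/

import Mathlib

open MeasureTheory Complex
open scoped Real RealInnerProductSpace BigOperators

noncomputable section

/-- `ℝⁿ` as a Euclidean space. -/
abbrev EN (n : ℕ) := EuclideanSpace ℝ (Fin n)

/-- The first order operator `D f(θ) = df_θ[v] + 2πi c ⟨v,θ⟩ f(θ)`; with
`c = σ̄⁻¹` (resp. `c = σ⁻¹`) and `v = b_j` it is `D_{σ,j}` (resp. `D_{σ̄,j}`). -/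
def Dop {n : ℕ} (c : ℂ) (v : EN n) (f : EN n → ℂ) : EN n → ℂ :=
  fun θ => fderiv ℝ f θ v + 2 * (π : ℂ) * I * c * (⟪v, θ⟫ : ℂ) * f θ

/-- The Gram matrix `C_{pq} = ⟨b_p, b_q⟩` of the basis `b`. -/
def Cmat {n : ℕ} (b : Fin n → EN n) : Matrix (Fin n) (Fin n) ℝ :=
  Matrix.of fun p q => ⟪b p, b q⟫

/-- `Δ̂_G = (ik/π)(σ̄/(σ̄−σ))² Σ_{p,q} C^{pq} D_{σ,p} D_{σ,q}`. -/
def DeltaG {n : ℕ} (k : ℕ) (σ : ℂ) (b : Fin n → EN n) (f : EN n → ℂ) : EN n → ℂ :=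
  fun θ => I * (k : ℂ) / (π : ℂ) * (starRingEnd ℂ σ / (starRingEnd ℂ σ - σ)) ^ 2 *
    ∑ p, ∑ q, ((Cmat b)⁻¹ p q : ℂ) *
      Dop (starRingEnd ℂ σ)⁻¹ (b p) (Dop (starRingEnd ℂ σ)⁻¹ (b q) f) θ

/-- `Δ̂_Ḡ = −(ik/π)(σ/(σ−σ̄))² Σ_{p,q} C^{pq} D_{σ̄,p} D_{σ̄,q}`. -/
def DeltaGbar {n : ℕ} (k : ℕ) (σ : ℂ) (b : Fin n → EN n) (f : EN n → ℂ) : EN n → ℂ :=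
  fun θ => -(I * (k : ℂ) / (π : ℂ)) * (σ / (σ - starRingEnd ℂ σ)) ^ 2 *
    ∑ p, ∑ q, ((Cmat b)⁻¹ p q : ℂ) *
      Dop σ⁻¹ (b p) (Dop σ⁻¹ (b q) f) θ

/-- The Laplace operator
`Δ̂_σ = nk + (ik/π)(σσ̄/(σ̄−σ)) Σ_{p,q} C^{pq} D_{σ,p} D_{σ̄,q}`. -/
def DeltaSigma {n : ℕ} (k : ℕ) (σ : ℂ) (b : Fin n → EN n) (f : EN n → ℂ) : EN n → ℂ :=
  fun θ => (n : ℂ) * (k : ℂ) * f θ +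
    I * (k : ℂ) / (π : ℂ) * (σ * starRingEnd ℂ σ / (starRingEnd ℂ σ - σ)) *
      ∑ p, ∑ q, ((Cmat b)⁻¹ p q : ℂ) *
        Dop (starRingEnd ℂ σ)⁻¹ (b p) (Dop σ⁻¹ (b q) f) θ

local notation "SM" => ContDiff ℝ ((⊤ : ℕ∞) : WithTop ℕ∞)

variable {n : ℕ}


lemma hasFDerivAt_innerc (v θ : EN n) :
    HasFDerivAt (fun x : EN n => (⟪v, x⟫ : ℂ))
      (Complex.ofRealCLM.comp (innerSL ℝ v)) θ :=
  (Complex.ofRealCLM.comp (innerSL ℝ v)).hasFDerivAt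

lemma contDiff_innerc (v : EN n) : SM (fun x : EN n => (⟪v, x⟫ : ℂ)) :=
  (Complex.ofRealCLM.comp (innerSL ℝ v)).contDiff

lemma ContDiff.dop {f : EN n → ℂ} (hf : SM f) (c : ℂ) (v : EN n) : SM (Dop c v f) := by
  unfold Dop
  apply ContDiff.add
  · exact (hf.fderiv_right (by simp)).clm_apply contDiff_const
  · exact (contDiff_const.mul (contDiff_innerc v)).mul hf

lemma dop_add {g h : EN n → ℂ} (c : ℂ) (v : EN n) (θ : EN n)
    (hg : DifferentiableAt ℝ g θ) (hh : DifferentiableAt ℝ h θ) :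
    Dop c v (fun x => g x + h x) θ = Dop c v g θ + Dop c v h θ := by
  unfold Dop
  rw [fderiv_fun_add hg hh]
  simp
  ring

lemma dop_const_mul {g : EN n → ℂ} (a c : ℂ) (v : EN n) (θ : EN n)
    (hg : DifferentiableAt ℝ g θ) :
    Dop c v (fun x => a * g x) θ = a * Dop c v g θ := by
  unfold Dop
  rw [fderiv_const_mul hg]
  simp
  ring

lemma dop_sum {ι : Type*} (s : Finset ι) (g : ι → EN n → ℂ) (c : ℂ) (v : EN n) (θ : EN n)
    (hg : ∀ i ∈ s, DifferentiableAt ℝ (g i) θ) :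
    Dop c v (fun x => ∑ i ∈ s, g i x) θ = ∑ i ∈ s, Dop c v (g i) θ := by
  unfold Dop
  rw [fderiv_fun_sum hg]
  simp [Finset.sum_add_distrib, Finset.mul_sum]

lemma dop_fderiv_apply {f : EN n → ℂ} (hf : SM f) (a' : ℂ) (w θ v : EN n) :
    fderiv ℝ (Dop a' w f) θ v =
      fderiv ℝ (fderiv ℝ f) θ v w
      + 2 * (π:ℂ) * I * a' * ((⟪w,v⟫ : ℂ) * f θ + (⟪w,θ⟫ : ℂ) * fderiv ℝ f θ v) := by
  set L := fderiv ℝ f with hLdef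
  have hL : ContDiff ℝ ((⊤ : ℕ∞) : WithTop ℕ∞) L := hf.fderiv_right (by simp)
  have hL' : HasFDerivAt L (fderiv ℝ L θ) θ :=
    ((hL.differentiable (by simp)) θ).hasFDerivAt
  have h1 : HasFDerivAt (fun x => L x w)
      ((ContinuousLinearMap.apply ℝ ℂ w).comp (fderiv ℝ L θ)) θ :=
    (ContinuousLinearMap.apply ℝ ℂ w).hasFDerivAt.comp θ hL'
  have hin : HasFDerivAt (fun x : EN n => (⟪w, x⟫ : ℂ))
      (Complex.ofRealCLM.comp (innerSL ℝ w)) θ := hasFDerivAt_innerc w θ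
  have hfθ : HasFDerivAt f (L θ) θ := ((hf.differentiable (by simp)) θ).hasFDerivAt
  have h2 := (hin.mul hfθ).const_mul (2 * (π:ℂ) * I * a')
  have heq : Dop a' w f =
      fun x => L x w + 2 * (π:ℂ) * I * a' * ((⟪w, x⟫ : ℂ) * f x) := by
    funext x; simp only [Dop, hLdef]; ring
  have hD : HasFDerivAt (Dop a' w f)
      ((ContinuousLinearMap.apply ℝ ℂ w).comp (fderiv ℝ L θ)
        + (2 * (π:ℂ) * I * a') • ((⟪w, θ⟫ : ℂ) • L θ
            + f θ • (Complex.ofRealCLM.comp (innerSL ℝ w)))) θ := by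
    rw [heq]; exact h1.add h2
  rw [hD.fderiv]
  simp only [ContinuousLinearMap.add_apply, ContinuousLinearMap.comp_apply,
    ContinuousLinearMap.apply_apply, ContinuousLinearMap.smul_apply, smul_eq_mul,
    Complex.ofRealCLM_apply, innerSL_apply_apply]
  ring

lemma dop_dop_comm {f : EN n → ℂ} (hf : SM f) (a a' : ℂ) (v w : EN n) :
    Dop a v (Dop a' w f) = fun θ =>
      Dop a' w (Dop a v f) θ + 2 * (π:ℂ) * I * (a' - a) * (⟪v, w⟫ : ℂ) * f θ := by
  funext θ
  have hsymm : fderiv ℝ (fderiv ℝ f) θ v w = fderiv ℝ (fderiv ℝ f) θ w v := by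
    refine second_derivative_symmetric (f := f) (f' := fderiv ℝ f) (x := θ) (fun y => ?_) ?_ v w
    · exact ((hf.differentiable (by norm_num)) y).hasFDerivAt
    · exact (((hf.fderiv_right (m := ((⊤ : ℕ∞) : WithTop ℕ∞)) (by simp)).differentiable (by norm_num)) θ).hasFDerivAt
  have e1 : Dop a v (Dop a' w f) θ =
      fderiv ℝ (Dop a' w f) θ v + 2*(π:ℂ)*I*a * (⟪v,θ⟫:ℂ) * (Dop a' w f θ) := rfl
  have e2 : Dop a' w (Dop a v f) θ =
      fderiv ℝ (Dop a v f) θ w + 2*(π:ℂ)*I*a' * (⟪w,θ⟫:ℂ) * (Dop a v f θ) := rfl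
  rw [e1, e2, dop_fderiv_apply hf a' w θ v, dop_fderiv_apply hf a v θ w, hsymm]
  simp only [Dop]
  rw [real_inner_comm w v]
  ring

lemma dop_add_smul {g h : EN n → ℂ} (hg : SM g) (hh : SM h) (c : ℂ) (v : EN n) (e : ℂ) :
    Dop c v (fun x => g x + e * h x) = fun θ => Dop c v g θ + e * Dop c v h θ := by
  funext θ
  have h1 : DifferentiableAt ℝ g θ := (hg.differentiable (by norm_num)) θ
  have h2 : DifferentiableAt ℝ (fun x => e * h x) θ :=
    (((hh.differentiable (by norm_num)) θ).const_mul e)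
  rw [dop_add c v θ h1 h2, dop_const_mul e c v θ ((hh.differentiable (by norm_num)) θ)]

lemma quad {f : EN n → ℂ} (hf : SM f) (c1 c2 c : ℂ) (v1 v2 w1 w2 : EN n) :
    Dop c1 v1 (Dop c2 v2 (Dop c w1 (Dop c w2 f))) = fun θ =>
      Dop c w1 (Dop c w2 (Dop c1 v1 (Dop c2 v2 f))) θ
      + 2*(π:ℂ)*I*(c-c2) * (⟪v2,w2⟫:ℂ) * Dop c1 v1 (Dop c w1 f) θ
      + 2*(π:ℂ)*I*(c-c2) * (⟪v2,w1⟫:ℂ) * Dop c1 v1 (Dop c w2 f) θ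
      + 2*(π:ℂ)*I*(c-c1) * (⟪v1,w2⟫:ℂ) * Dop c w1 (Dop c2 v2 f) θ
      + 2*(π:ℂ)*I*(c-c1) * (⟪v1,w1⟫:ℂ) * Dop c w2 (Dop c2 v2 f) θ := by
  have hw2 : SM (Dop c w2 f) := hf.dop c w2
  have hv2 : SM (Dop c2 v2 f) := hf.dop c2 v2
  have hw2v2 : SM (Dop c w2 (Dop c2 v2 f)) := hv2.dop c w2
  have hv1v2 : SM (Dop c1 v1 (Dop c2 v2 f)) := hv2.dop c1 v1
  -- step 1 : push Dop c2 v2 through the two inner operators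
  have s1 : Dop c2 v2 (Dop c w2 f) = fun θ =>
      Dop c w2 (Dop c2 v2 f) θ + 2*(π:ℂ)*I*(c-c2) * (⟪v2,w2⟫:ℂ) * f θ :=
    dop_dop_comm hf c2 c v2 w2
  have s2 : Dop c2 v2 (Dop c w1 (Dop c w2 f)) = fun θ =>
      Dop c w1 (Dop c w2 (Dop c2 v2 f)) θ
      + 2*(π:ℂ)*I*(c-c2) * (⟪v2,w2⟫:ℂ) * Dop c w1 f θ
      + 2*(π:ℂ)*I*(c-c2) * (⟪v2,w1⟫:ℂ) * Dop c w2 f θ := by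
    rw [dop_dop_comm hw2 c2 c v2 w1, s1, dop_add_smul hw2v2 hf c w1]
  -- step 2 : apply Dop c1 v1
  have s3 : Dop c1 v1 (Dop c w2 (Dop c2 v2 f)) = fun θ =>
      Dop c w2 (Dop c1 v1 (Dop c2 v2 f)) θ
      + 2*(π:ℂ)*I*(c-c1) * (⟪v1,w2⟫:ℂ) * Dop c2 v2 f θ :=
    dop_dop_comm hv2 c1 c v1 w2
  have s4 : Dop c1 v1 (Dop c w1 (Dop c w2 (Dop c2 v2 f))) = fun θ =>
      Dop c w1 (Dop c w2 (Dop c1 v1 (Dop c2 v2 f))) θ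
      + 2*(π:ℂ)*I*(c-c1) * (⟪v1,w2⟫:ℂ) * Dop c w1 (Dop c2 v2 f) θ
      + 2*(π:ℂ)*I*(c-c1) * (⟪v1,w1⟫:ℂ) * Dop c w2 (Dop c2 v2 f) θ := by
    rw [dop_dop_comm hw2v2 c1 c v1 w1, s3, dop_add_smul (hv1v2.dop c w2) hv2 c w1]
  have expand : Dop c1 v1 (Dop c2 v2 (Dop c w1 (Dop c w2 f))) = fun θ =>
      Dop c1 v1 (Dop c w1 (Dop c w2 (Dop c2 v2 f))) θ
      + 2*(π:ℂ)*I*(c-c2) * (⟪v2,w2⟫:ℂ) * Dop c1 v1 (Dop c w1 f) θ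
      + 2*(π:ℂ)*I*(c-c2) * (⟪v2,w1⟫:ℂ) * Dop c1 v1 (Dop c w2 f) θ := by
    rw [s2]
    funext θ
    have d1 : DifferentiableAt ℝ (fun x => Dop c w1 (Dop c w2 (Dop c2 v2 f)) x
        + 2*(π:ℂ)*I*(c-c2) * (⟪v2,w2⟫:ℂ) * Dop c w1 f x) θ := by
      exact (((hw2v2.dop c w1).differentiable (by norm_num)) θ).add
        ((((hf.dop c w1).differentiable (by norm_num)) θ).const_mul _)
    have d2 : DifferentiableAt ℝ (fun x =>
        2*(π:ℂ)*I*(c-c2) * (⟪v2,w1⟫:ℂ) * Dop c w2 f x) θ :=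
      (((hw2.differentiable (by norm_num)) θ).const_mul _)
    rw [show (fun x => Dop c w1 (Dop c w2 (Dop c2 v2 f)) x
        + 2*(π:ℂ)*I*(c-c2) * (⟪v2,w2⟫:ℂ) * Dop c w1 f x
        + 2*(π:ℂ)*I*(c-c2) * (⟪v2,w1⟫:ℂ) * Dop c w2 f x)
      = fun x => (Dop c w1 (Dop c w2 (Dop c2 v2 f)) x
        + 2*(π:ℂ)*I*(c-c2) * (⟪v2,w2⟫:ℂ) * Dop c w1 f x)
        + 2*(π:ℂ)*I*(c-c2) * (⟪v2,w1⟫:ℂ) * Dop c w2 f x from rfl,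
      dop_add c1 v1 θ d1 d2,
      dop_const_mul _ c1 v1 θ ((hw2.differentiable (by norm_num)) θ)]
    have := congrFun (dop_add_smul (hw2v2.dop c w1) (hf.dop c w1) c1 v1
      (2*(π:ℂ)*I*(c-c2) * (⟪v2,w2⟫:ℂ))) θ
    rw [this]
  rw [expand, s4]
  funext θ
  ring

def Sop (c1 c2 : ℂ) (b : Fin n → EN n) (f : EN n → ℂ) : EN n → ℂ :=
  fun θ => ∑ p, ∑ q, ((Cmat b)⁻¹ p q : ℂ) * Dop c1 (b p) (Dop c2 (b q) f) θ

lemma sop_smooth {f : EN n → ℂ} (hf : SM f) (c1 c2 : ℂ) (b : Fin n → EN n) :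
    SM (Sop c1 c2 b f) := by
  unfold Sop
  exact ContDiff.sum fun p _ => ContDiff.sum fun q _ =>
    contDiff_const.mul ((hf.dop c2 (b q)).dop c1 (b p))

lemma dop_lin {g h : EN n → ℂ} (hg : SM g) (hh : SM h) (c : ℂ) (v : EN n) (a1 a2 : ℂ) :
    Dop c v (fun x => a1 * g x + a2 * h x) =
      fun θ => a1 * Dop c v g θ + a2 * Dop c v h θ := by
  funext θ
  have d1 : DifferentiableAt ℝ (fun x => a1 * g x) θ :=
    ((hg.differentiable (by norm_num)) θ).const_mul a1
  have d2 : DifferentiableAt ℝ (fun x => a2 * h x) θ :=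
    ((hh.differentiable (by norm_num)) θ).const_mul a2
  rw [dop_add c v θ d1 d2, dop_const_mul a1 c v θ ((hg.differentiable (by norm_num)) θ),
    dop_const_mul a2 c v θ ((hh.differentiable (by norm_num)) θ)]

lemma dop2_lin {g h : EN n → ℂ} (hg : SM g) (hh : SM h) (c1 c2 : ℂ) (v1 v2 : EN n)
    (a1 a2 : ℂ) :
    Dop c1 v1 (Dop c2 v2 (fun x => a1 * g x + a2 * h x)) =
      fun θ => a1 * Dop c1 v1 (Dop c2 v2 g) θ + a2 * Dop c1 v1 (Dop c2 v2 h) θ := by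
  rw [dop_lin hg hh c2 v2 a1 a2, dop_lin (hg.dop c2 v2) (hh.dop c2 v2) c1 v1 a1 a2]

lemma sop_lin {g h : EN n → ℂ} (hg : SM g) (hh : SM h) (c1 c2 : ℂ) (b : Fin n → EN n)
    (a1 a2 : ℂ) (θ : EN n) :
    Sop c1 c2 b (fun x => a1 * g x + a2 * h x) θ =
      a1 * Sop c1 c2 b g θ + a2 * Sop c1 c2 b h θ := by
  unfold Sop
  simp only [dop2_lin hg hh c1 c2]
  rw [Finset.mul_sum, Finset.mul_sum, ← Finset.sum_add_distrib]
  refine Finset.sum_congr rfl fun p _ => ?_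
  rw [Finset.mul_sum, Finset.mul_sum, ← Finset.sum_add_distrib]
  refine Finset.sum_congr rfl fun q _ => ?_
  ring

lemma dop_double (c : ℂ) (v : EN n) (a : Fin n → Fin n → ℂ) (g : Fin n → Fin n → EN n → ℂ)
    (hg : ∀ r s, SM (g r s)) :
    Dop c v (fun x => ∑ r, ∑ s, a r s * g r s x) =
      fun θ => ∑ r, ∑ s, a r s * Dop c v (g r s) θ := by
  funext θ
  rw [dop_sum Finset.univ _ c v θ (fun r _ => Differentiable.fun_sum
    (fun s _ => (((hg r s).differentiable (by norm_num))).const_mul (a r s)) θ)]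
  refine Finset.sum_congr rfl fun r _ => ?_
  rw [dop_sum Finset.univ _ c v θ
    (fun s _ => (((hg r s).differentiable (by norm_num)) θ).const_mul (a r s))]
  exact Finset.sum_congr rfl fun s _ =>
    dop_const_mul (a r s) c v θ (((hg r s).differentiable (by norm_num)) θ)

lemma sop_sop {f : EN n → ℂ} (hf : SM f) (c1 c2 c3 c4 : ℂ) (b : Fin n → EN n) (θ : EN n) :
    Sop c1 c2 b (Sop c3 c4 b f) θ =
      ∑ p, ∑ q, ∑ r, ∑ s, ((Cmat b)⁻¹ p q : ℂ) * ((Cmat b)⁻¹ r s : ℂ) *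
        Dop c1 (b p) (Dop c2 (b q) (Dop c3 (b r) (Dop c4 (b s) f))) θ := by
  have hg : ∀ r s : Fin n, SM (Dop c3 (b r) (Dop c4 (b s) f)) :=
    fun r s => (hf.dop c4 (b s)).dop c3 (b r)
  unfold Sop
  refine Finset.sum_congr rfl fun p _ => Finset.sum_congr rfl fun q _ => ?_
  rw [dop_double c2 (b q) _ _ hg]
  rw [dop_double c1 (b p) _ _ (fun r s => (hg r s).dop c2 (b q))]
  rw [Finset.mul_sum]
  refine Finset.sum_congr rfl fun r _ => ?_
  rw [Finset.mul_sum]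
  exact Finset.sum_congr rfl fun s _ => by ring

lemma cmat_det_isUnit (b : Module.Basis (Fin n) ℝ (EN n)) : IsUnit (Cmat ⇑b).det := by
  classical
  set e := (EuclideanSpace.basisFun (Fin n) ℝ).toBasis
  set A := e.toMatrix ⇑b with hA
  have h : Cmat ⇑b = A.transpose * A := by
    ext p q
    simp only [Cmat, Matrix.of_apply, Matrix.mul_apply, Matrix.transpose_apply]
    rw [PiLp.inner_apply]
    refine Finset.sum_congr rfl fun i _ => ?_
    have : ∀ j, A i j = b j i := fun j => by
      simp [hA, Module.Basis.toMatrix_apply, e, EuclideanSpace.basisFun_repr]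
    simp [this, RCLike.inner_apply, mul_comm]
  have : Invertible A := e.invertibleToMatrix b
  rw [h, Matrix.det_mul, Matrix.det_transpose]
  exact ((Matrix.isUnit_iff_isUnit_det A).mp (isUnit_of_invertible A)).mul
    ((Matrix.isUnit_iff_isUnit_det A).mp (isUnit_of_invertible A))

lemma cmat_symm (b : Fin n → EN n) (p q : Fin n) : Cmat b p q = Cmat b q p := by
  simp only [Cmat, Matrix.of_apply]
  exact real_inner_comm _ _

lemma cmat_inv_symm (b : Fin n → EN n) (p q : Fin n) :
    (Cmat b)⁻¹ p q = (Cmat b)⁻¹ q p := by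
  have h : (Cmat b).transpose = Cmat b := by
    ext p q; simp [Matrix.transpose_apply, cmat_symm]
  conv_lhs => rw [← h, ← Matrix.transpose_nonsing_inv]
  rw [Matrix.transpose_apply]

lemma cmat_contract (b : Module.Basis (Fin n) ℝ (EN n)) (p r : Fin n) :
    ∑ q, ∑ s, (Cmat ⇑b)⁻¹ p q * Cmat ⇑b q s * (Cmat ⇑b)⁻¹ r s = (Cmat ⇑b)⁻¹ p r := by
  have hdet := cmat_det_isUnit b
  have h1 : Cmat ⇑b * (Cmat ⇑b)⁻¹ = 1 := Matrix.mul_nonsing_inv _ hdet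
  calc ∑ q, ∑ s, (Cmat ⇑b)⁻¹ p q * Cmat ⇑b q s * (Cmat ⇑b)⁻¹ r s
      = ∑ q, (Cmat ⇑b)⁻¹ p q * ((Cmat ⇑b * (Cmat ⇑b)⁻¹) q r) := by
        refine Finset.sum_congr rfl fun q _ => ?_
        rw [Matrix.mul_apply, Finset.mul_sum]
        exact Finset.sum_congr rfl fun s _ => by rw [cmat_inv_symm b r s]; ring
    _ = (Cmat ⇑b)⁻¹ p r := by
        rw [h1]
        simp [Matrix.one_apply, Finset.sum_ite_eq]

section swaps
variable (g : Fin n → Fin n → Fin n → Fin n → ℂ)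

lemma swap12 : ∑ a, ∑ b, ∑ c, ∑ d, g a b c d = ∑ b, ∑ a, ∑ c, ∑ d, g a b c d :=
  Finset.sum_comm

lemma swap23 : ∑ a, ∑ b, ∑ c, ∑ d, g a b c d = ∑ a, ∑ c, ∑ b, ∑ d, g a b c d :=
  Finset.sum_congr rfl fun a _ => Finset.sum_comm

lemma swap34 : ∑ a, ∑ b, ∑ c, ∑ d, g a b c d = ∑ a, ∑ b, ∑ d, ∑ c, g a b c d :=
  Finset.sum_congr rfl fun a _ => Finset.sum_congr rfl fun b _ => Finset.sum_comm

lemma sum4_swap : ∑ p, ∑ q, ∑ r, ∑ s, g p q r s = ∑ p, ∑ q, ∑ r, ∑ s, g r s p q := by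
  calc ∑ p, ∑ q, ∑ r, ∑ s, g p q r s
      = ∑ p, ∑ r, ∑ q, ∑ s, g p q r s := swap23 g
    _ = ∑ r, ∑ p, ∑ q, ∑ s, g p q r s := swap12 _
    _ = ∑ r, ∑ p, ∑ s, ∑ q, g p q r s := swap34 _
    _ = ∑ r, ∑ s, ∑ p, ∑ q, g p q r s := Finset.sum_congr rfl fun r _ => Finset.sum_comm

end swaps

section contract
variable (M N T : Fin n → Fin n → ℂ)

lemma contractA (hA : ∀ p r, ∑ q, ∑ s, M p q * N q s * M r s = M p r) :
    ∑ p, ∑ q, ∑ r, ∑ s, M p q * M r s * (N q s * T p r) = ∑ p, ∑ r, M p r * T p r := by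
  refine Finset.sum_congr rfl fun p _ => ?_
  calc ∑ q, ∑ r, ∑ s, M p q * M r s * (N q s * T p r)
      = ∑ r, ∑ q, ∑ s, (M p q * N q s * M r s) * T p r := by
        rw [Finset.sum_comm]
        exact Finset.sum_congr rfl fun r _ => Finset.sum_congr rfl fun q _ =>
          Finset.sum_congr rfl fun s _ => by ring
    _ = ∑ r, (∑ q, ∑ s, M p q * N q s * M r s) * T p r := by
        refine Finset.sum_congr rfl fun r _ => ?_
        rw [Finset.sum_mul]
        exact Finset.sum_congr rfl fun q _ => by rw [Finset.sum_mul]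
    _ = ∑ r, M p r * T p r := Finset.sum_congr rfl fun r _ => by rw [hA p r]

lemma contractB (hM : ∀ a b, M a b = M b a)
    (hA : ∀ p r, ∑ q, ∑ s, M p q * N q s * M r s = M p r) :
    ∑ p, ∑ q, ∑ r, ∑ s, M p q * M r s * (N q r * T p s) = ∑ p, ∑ s, M p s * T p s := by
  calc ∑ p, ∑ q, ∑ r, ∑ s, M p q * M r s * (N q r * T p s)
      = ∑ p, ∑ q, ∑ r, ∑ s, M p q * M r s * (N q s * T p r) := by
        refine Finset.sum_congr rfl fun p _ => Finset.sum_congr rfl fun q _ => ?_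
        rw [Finset.sum_comm]
        exact Finset.sum_congr rfl fun r _ => Finset.sum_congr rfl fun s _ => by
          rw [hM r s]
    _ = ∑ p, ∑ r, M p r * T p r := contractA M N T hA

lemma contractC (hM : ∀ a b, M a b = M b a)
    (hA : ∀ p r, ∑ q, ∑ s, M p q * N q s * M r s = M p r) :
    ∑ p, ∑ q, ∑ r, ∑ s, M p q * M r s * (N p s * T r q) = ∑ p, ∑ q, M p q * T p q := by
  calc ∑ p, ∑ q, ∑ r, ∑ s, M p q * M r s * (N p s * T r q)
      = ∑ p, ∑ r, ∑ q, ∑ s, M p q * M r s * (N p s * T r q) := swap23 _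
    _ = ∑ r, ∑ p, ∑ q, ∑ s, M p q * M r s * (N p s * T r q) := swap12 _
    _ = ∑ r, ∑ q, ∑ p, ∑ s, M p q * M r s * (N p s * T r q) :=
        Finset.sum_congr rfl fun r _ => Finset.sum_comm
    _ = ∑ r, ∑ q, M r q * T r q := by
        refine Finset.sum_congr rfl fun r _ => Finset.sum_congr rfl fun q _ => ?_
        calc ∑ p, ∑ s, M p q * M r s * (N p s * T r q)
            = (∑ p, ∑ s, M q p * N p s * M r s) * T r q := by
              rw [Finset.sum_mul]
              exact Finset.sum_congr rfl fun p _ => by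
                rw [Finset.sum_mul]
                exact Finset.sum_congr rfl fun s _ => by rw [hM q p]; ring
          _ = M r q * T r q := by rw [hA q r, hM q r]

lemma contractD (hM : ∀ a b, M a b = M b a)
    (hA : ∀ p r, ∑ q, ∑ s, M p q * N q s * M r s = M p r) :
    ∑ p, ∑ q, ∑ r, ∑ s, M p q * M r s * (N p r * T s q) = ∑ p, ∑ q, M p q * T p q := by
  calc ∑ p, ∑ q, ∑ r, ∑ s, M p q * M r s * (N p r * T s q)
      = ∑ p, ∑ q, ∑ s, ∑ r, M p q * M r s * (N p r * T s q) := swap34 _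
    _ = ∑ p, ∑ s, ∑ q, ∑ r, M p q * M r s * (N p r * T s q) := swap23 _
    _ = ∑ s, ∑ p, ∑ q, ∑ r, M p q * M r s * (N p r * T s q) := swap12 _
    _ = ∑ s, ∑ q, ∑ p, ∑ r, M p q * M r s * (N p r * T s q) :=
        Finset.sum_congr rfl fun s _ => Finset.sum_comm
    _ = ∑ s, ∑ q, M s q * T s q := by
        refine Finset.sum_congr rfl fun s _ => Finset.sum_congr rfl fun q _ => ?_
        calc ∑ p, ∑ r, M p q * M r s * (N p r * T s q)
            = (∑ p, ∑ r, M q p * N p r * M s r) * T s q := by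
              rw [Finset.sum_mul]
              exact Finset.sum_congr rfl fun p _ => by
                rw [Finset.sum_mul]
                exact Finset.sum_congr rfl fun r _ => by rw [hM q p, hM s r]; ring
          _ = M s q * T s q := by rw [hA q s, hM q s]

end contract


section main
variable (b : Module.Basis (Fin n) ℝ (EN n))

lemma cmat_contract_c (p r : Fin n) :
    ∑ q, ∑ s, ((Cmat ⇑b)⁻¹ p q : ℂ) * ((⟪b q, b s⟫ : ℝ) : ℂ) * ((Cmat ⇑b)⁻¹ r s : ℂ)
      = ((Cmat ⇑b)⁻¹ p r : ℂ) := by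
  have h := cmat_contract b p r
  simp only [Cmat, Matrix.of_apply] at h
  exact_mod_cast h

lemma mc_symm (a c : Fin n) : ((Cmat ⇑b)⁻¹ a c : ℂ) = ((Cmat ⇑b)⁻¹ c a : ℂ) := by
  norm_cast
  exact cmat_inv_symm ⇑b a c

lemma sop_comm_G {F : EN n → ℂ} (hF : SM F) (c d : ℂ) (θ : EN n) :
    Sop c d ⇑b (Sop c c ⇑b F) θ - Sop c c ⇑b (Sop c d ⇑b F) θ
      = 2 * (2*(π:ℂ)*I*(c-d)) * Sop c c ⇑b F θ := by
  set M : Fin n → Fin n → ℂ := fun a c' => ((Cmat ⇑b)⁻¹ a c' : ℂ) with hM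
  set N : Fin n → Fin n → ℂ := fun a c' => ((⟪b a, b c'⟫ : ℝ) : ℂ) with hN
  set K : ℂ := 2*(π:ℂ)*I*(c-d) with hK
  have hA := cmat_contract_c b
  have hMs := mc_symm b
  rw [sop_sop hF c d c c ⇑b θ, sop_sop hF c c c d ⇑b θ]
  have hswap : ∑ p, ∑ q, ∑ r, ∑ s, M p q * M r s *
        Dop c (b p) (Dop c (b q) (Dop c (b r) (Dop d (b s) F))) θ
      = ∑ p, ∑ q, ∑ r, ∑ s, M p q * M r s *
        Dop c (b r) (Dop c (b s) (Dop c (b p) (Dop d (b q) F))) θ := by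
    rw [sum4_swap]
    exact Finset.sum_congr rfl fun p _ => Finset.sum_congr rfl fun q _ =>
      Finset.sum_congr rfl fun r _ => Finset.sum_congr rfl fun s _ => by ring
  rw [hswap]
  have key : ∀ p q r s : Fin n,
      M p q * M r s * Dop c (b p) (Dop d (b q) (Dop c (b r) (Dop c (b s) F))) θ
      - M p q * M r s * Dop c (b r) (Dop c (b s) (Dop c (b p) (Dop d (b q) F))) θ
      = K * (M p q * M r s * (N q s * Dop c (b p) (Dop c (b r) F) θ))
        + K * (M p q * M r s * (N q r * Dop c (b p) (Dop c (b s) F) θ)) := by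
    intro p q r s
    rw [congrFun (quad hF c d c (b p) (b q) (b r) (b s)) θ]
    simp only [hN, hK]
    ring
  calc (∑ p, ∑ q, ∑ r, ∑ s, M p q * M r s *
          Dop c (b p) (Dop d (b q) (Dop c (b r) (Dop c (b s) F))) θ)
      - ∑ p, ∑ q, ∑ r, ∑ s, M p q * M r s *
          Dop c (b r) (Dop c (b s) (Dop c (b p) (Dop d (b q) F))) θ
      = ∑ p, ∑ q, ∑ r, ∑ s,
          (K * (M p q * M r s * (N q s * Dop c (b p) (Dop c (b r) F) θ))
          + K * (M p q * M r s * (N q r * Dop c (b p) (Dop c (b s) F) θ))) := by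
        rw [← Finset.sum_sub_distrib]
        refine Finset.sum_congr rfl fun p _ => ?_
        rw [← Finset.sum_sub_distrib]
        refine Finset.sum_congr rfl fun q _ => ?_
        rw [← Finset.sum_sub_distrib]
        refine Finset.sum_congr rfl fun r _ => ?_
        rw [← Finset.sum_sub_distrib]
        exact Finset.sum_congr rfl fun s _ => key p q r s
    _ = K * (∑ p, ∑ q, ∑ r, ∑ s, M p q * M r s * (N q s * Dop c (b p) (Dop c (b r) F) θ))
        + K * ∑ p, ∑ q, ∑ r, ∑ s, M p q * M r s * (N q r * Dop c (b p) (Dop c (b s) F) θ) := by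
        simp only [Finset.sum_add_distrib, ← Finset.mul_sum]
    _ = K * (∑ p, ∑ r, M p r * Dop c (b p) (Dop c (b r) F) θ)
        + K * ∑ p, ∑ s, M p s * Dop c (b p) (Dop c (b s) F) θ := by
        rw [contractA M N _ hA, contractB M N _ hMs hA]
    _ = 2 * K * Sop c c ⇑b F θ := by
        unfold Sop
        ring



lemma sop_comm_Gbar {F : EN n → ℂ} (hF : SM F) (c d : ℂ) (θ : EN n) :
    Sop c d ⇑b (Sop d d ⇑b F) θ - Sop d d ⇑b (Sop c d ⇑b F) θ
      = 2 * (2*(π:ℂ)*I*(d-c)) * Sop d d ⇑b F θ := by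
  set M : Fin n → Fin n → ℂ := fun a c' => ((Cmat ⇑b)⁻¹ a c' : ℂ) with hM
  set N : Fin n → Fin n → ℂ := fun a c' => ((⟪b a, b c'⟫ : ℝ) : ℂ) with hN
  set K : ℂ := 2*(π:ℂ)*I*(d-c) with hK
  have hA := cmat_contract_c b
  have hMs := mc_symm b
  rw [sop_sop hF c d d d ⇑b θ, sop_sop hF d d c d ⇑b θ]
  have hswap : ∑ p, ∑ q, ∑ r, ∑ s, M p q * M r s *
        Dop d (b p) (Dop d (b q) (Dop c (b r) (Dop d (b s) F))) θ
      = ∑ p, ∑ q, ∑ r, ∑ s, M p q * M r s *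
        Dop d (b r) (Dop d (b s) (Dop c (b p) (Dop d (b q) F))) θ := by
    rw [sum4_swap]
    exact Finset.sum_congr rfl fun p _ => Finset.sum_congr rfl fun q _ =>
      Finset.sum_congr rfl fun r _ => Finset.sum_congr rfl fun s _ => by ring
  rw [hswap]
  have key : ∀ p q r s : Fin n,
      M p q * M r s * Dop c (b p) (Dop d (b q) (Dop d (b r) (Dop d (b s) F))) θ
      - M p q * M r s * Dop d (b r) (Dop d (b s) (Dop c (b p) (Dop d (b q) F))) θ
      = K * (M p q * M r s * (N p s * Dop d (b r) (Dop d (b q) F) θ))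
        + K * (M p q * M r s * (N p r * Dop d (b s) (Dop d (b q) F) θ)) := by
    intro p q r s
    rw [congrFun (quad hF c d d (b p) (b q) (b r) (b s)) θ]
    simp only [hN, hK]
    ring
  calc (∑ p, ∑ q, ∑ r, ∑ s, M p q * M r s *
          Dop c (b p) (Dop d (b q) (Dop d (b r) (Dop d (b s) F))) θ)
      - ∑ p, ∑ q, ∑ r, ∑ s, M p q * M r s *
          Dop d (b r) (Dop d (b s) (Dop c (b p) (Dop d (b q) F))) θ
      = ∑ p, ∑ q, ∑ r, ∑ s,
          (K * (M p q * M r s * (N p s * Dop d (b r) (Dop d (b q) F) θ))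
          + K * (M p q * M r s * (N p r * Dop d (b s) (Dop d (b q) F) θ))) := by
        rw [← Finset.sum_sub_distrib]
        refine Finset.sum_congr rfl fun p _ => ?_
        rw [← Finset.sum_sub_distrib]
        refine Finset.sum_congr rfl fun q _ => ?_
        rw [← Finset.sum_sub_distrib]
        refine Finset.sum_congr rfl fun r _ => ?_
        rw [← Finset.sum_sub_distrib]
        exact Finset.sum_congr rfl fun s _ => key p q r s
    _ = K * (∑ p, ∑ q, ∑ r, ∑ s, M p q * M r s * (N p s * Dop d (b r) (Dop d (b q) F) θ))
        + K * ∑ p, ∑ q, ∑ r, ∑ s, M p q * M r s * (N p r * Dop d (b s) (Dop d (b q) F) θ) := by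
        simp only [Finset.sum_add_distrib, ← Finset.mul_sum]
    _ = K * (∑ p, ∑ q, M p q * Dop d (b p) (Dop d (b q) F) θ)
        + K * ∑ p, ∑ q, M p q * Dop d (b p) (Dop d (b q) F) θ := by
        rw [contractC M N _ hMs hA, contractD M N _ hMs hA]
    _ = 2 * K * Sop d d ⇑b F θ := by
        unfold Sop
        ring


end main

lemma dop_const_mul_fun {n : ℕ} {g : EN n → ℂ} (hg : SM g) (a : ℂ) (c : ℂ) (v : EN n) :
    Dop c v (fun x => a * g x) = fun θ => a * Dop c v g θ :=
  funext fun θ => dop_const_mul a c v θ ((hg.differentiable (by norm_num)) θ)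

lemma sop_const_mul {n : ℕ} {g : EN n → ℂ} (hg : SM g) (b : Fin n → EN n)
    (a c1 c2 : ℂ) (θ : EN n) :
    Sop c1 c2 b (fun x => a * g x) θ = a * Sop c1 c2 b g θ := by
  unfold Sop
  rw [Finset.mul_sum]
  refine Finset.sum_congr rfl fun p _ => ?_
  rw [Finset.mul_sum]
  refine Finset.sum_congr rfl fun q _ => ?_
  rw [dop_const_mul_fun hg a c2 (b q), dop_const_mul_fun (hg.dop c2 (b q)) a c1 (b p)]
  ring


/-- the Laplace operator `Δ̂_σ` satisfies the commutation relations
`[Δ̂_σ, Δ̂_G] = 4k Δ̂_G` and `[Δ̂_σ, Δ̂_Ḡ] = −4k Δ̂_Ḡ` on Schwartz functions. -/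
theorem laplacian_commutators
    (n : ℕ) (k : ℕ) (hk : 0 < k) (b : Module.Basis (Fin n) ℝ (EN n))
    (σ : ℂ) (hσ : 0 < σ.im) (f : SchwartzMap (EN n) ℂ) :
    (∀ θ : EN n,
      DeltaSigma k σ ⇑b (DeltaG k σ ⇑b ⇑f) θ -
          DeltaG k σ ⇑b (DeltaSigma k σ ⇑b ⇑f) θ =
        4 * (k : ℂ) * DeltaG k σ ⇑b ⇑f θ) ∧
    ∀ θ : EN n,
      DeltaSigma k σ ⇑b (DeltaGbar k σ ⇑b ⇑f) θ -
          DeltaGbar k σ ⇑b (DeltaSigma k σ ⇑b ⇑f) θ =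
        -(4 * (k : ℂ)) * DeltaGbar k σ ⇑b ⇑f θ := by
  have hF : SM (⇑f) := f.smooth ⊤
  have hπ : (π : ℂ) ≠ 0 := Complex.ofReal_ne_zero.mpr Real.pi_ne_zero
  have hσ0 : σ ≠ 0 := by
    intro h; rw [h] at hσ; simp at hσ
  have hσc : starRingEnd ℂ σ ≠ 0 := by
    simpa using hσ0
  have hd : starRingEnd ℂ σ - σ ≠ 0 := by
    rw [sub_ne_zero]
    intro h
    have : σ.im = 0 := (Complex.conj_eq_iff_im).mp h
    linarith
  set c1 : ℂ := (starRingEnd ℂ σ)⁻¹ with hc1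
  set c2 : ℂ := σ⁻¹ with hc2
  have fold : ∀ (d1 d2 : ℂ) (g : EN n → ℂ) (θ : EN n),
      (∑ p, ∑ q, ((Cmat ⇑b)⁻¹ p q : ℂ) * Dop d1 (b p) (Dop d2 (b q) g) θ)
        = Sop d1 d2 ⇑b g θ := fun _ _ _ _ => rfl
  constructor
  · intro θ
    have hS : SM (Sop c1 c1 ⇑b ⇑f) := sop_smooth hF c1 c1 ⇑b
    have hS12 : SM (Sop c1 c2 ⇑b ⇑f) := sop_smooth hF c1 c2 ⇑b
    have hDG : DeltaG k σ ⇑b ⇑f = fun x =>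
        (I * (k : ℂ) / (π : ℂ) * (starRingEnd ℂ σ / (starRingEnd ℂ σ - σ)) ^ 2) *
          Sop c1 c1 ⇑b ⇑f x := rfl
    have hDS : DeltaSigma k σ ⇑b ⇑f = fun x =>
        ((n : ℂ) * (k : ℂ)) * (⇑f) x +
        (I * (k : ℂ) / (π : ℂ) * (σ * starRingEnd ℂ σ / (starRingEnd ℂ σ - σ))) *
          Sop c1 c2 ⇑b ⇑f x := rfl
    simp only [hDG, hDS]
    simp only [DeltaSigma, DeltaG, fold]
    rw [sop_const_mul hS ⇑b _ c1 c2 θ]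
    rw [sop_lin hF hS12 c1 c1 ⇑b _ _ θ]
    have hcomm := sop_comm_G b hF c1 c2 θ
    have hA4 : (I * (k : ℂ) / (π : ℂ) * (σ * starRingEnd ℂ σ / (starRingEnd ℂ σ - σ)))
        * (2 * (2*(π:ℂ)*I*(c1 - c2))) = 4 * (k : ℂ) := by
      rw [hc1, hc2]
      field_simp
      ring_nf
      simp [Complex.I_sq]
    linear_combination
      ((I * (k : ℂ) / (π : ℂ) * (σ * starRingEnd ℂ σ / (starRingEnd ℂ σ - σ))) *
        (I * (k : ℂ) / (π : ℂ) * (starRingEnd ℂ σ / (starRingEnd ℂ σ - σ)) ^ 2)) * hcomm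
      + ((I * (k : ℂ) / (π : ℂ) * (starRingEnd ℂ σ / (starRingEnd ℂ σ - σ)) ^ 2)
          * Sop c1 c1 ⇑b ⇑f θ) * hA4
  · intro θ
    have hS : SM (Sop c2 c2 ⇑b ⇑f) := sop_smooth hF c2 c2 ⇑b
    have hS12 : SM (Sop c1 c2 ⇑b ⇑f) := sop_smooth hF c1 c2 ⇑b
    have hDG : DeltaGbar k σ ⇑b ⇑f = fun x =>
        (-(I * (k : ℂ) / (π : ℂ)) * (σ / (σ - starRingEnd ℂ σ)) ^ 2) *
          Sop c2 c2 ⇑b ⇑f x := rfl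
    have hDS : DeltaSigma k σ ⇑b ⇑f = fun x =>
        ((n : ℂ) * (k : ℂ)) * (⇑f) x +
        (I * (k : ℂ) / (π : ℂ) * (σ * starRingEnd ℂ σ / (starRingEnd ℂ σ - σ))) *
          Sop c1 c2 ⇑b ⇑f x := rfl
    simp only [hDG, hDS]
    simp only [DeltaSigma, DeltaGbar, fold]
    rw [sop_const_mul hS ⇑b _ c1 c2 θ]
    rw [sop_lin hF hS12 c2 c2 ⇑b _ _ θ]
    have hcomm := sop_comm_Gbar b hF c1 c2 θ
    have hA4 : (I * (k : ℂ) / (π : ℂ) * (σ * starRingEnd ℂ σ / (starRingEnd ℂ σ - σ)))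
        * (2 * (2*(π:ℂ)*I*(c2 - c1))) = -(4 * (k : ℂ)) := by
      rw [hc1, hc2]
      field_simp
      ring_nf
      simp [Complex.I_sq]
    linear_combination
      ((I * (k : ℂ) / (π : ℂ) * (σ * starRingEnd ℂ σ / (starRingEnd ℂ σ - σ)))
        * (-(I * (k : ℂ) / (π : ℂ)) * (σ / (σ - starRingEnd ℂ σ)) ^ 2)) * hcomm
      + ((-(I * (k : ℂ) / (π : ℂ)) * (σ / (σ - starRingEnd ℂ σ)) ^ 2)
          * Sop c2 c2 ⇑b ⇑f θ) * hA4

end
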